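/- Let E ⊆ T² be an open set of class C² with |E| = m and P(E) ≤ M, and suppose two distinct connected components Γ_i, Γ_j of ∂E satisfy ∫_{Γ_i} κ_E dH¹ = 0 and ∫_{Γ_j} κ_E dH¹ = 2π. Then ε := ‖κ_E − κ̄_E‖_{L²(∂E)} satisfies H¹(Γ_i) ≤ C(M) ε², where κ̄_E is the average of κ_E over ∂E. In particular, if ε is small enough (depending on M) this contradicts H¹(Γ_i) ≥ 1, so such a pair of components cannot exist for small ε. -/

import Mathlib

open MeasureTheory ENNReal

lemma cs_sq_integral {α : Type} [MeasurableSpace α] (ν : Measure α) [IsFiniteMeasure ν]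
    {f : α → ℝ} (hf : MemLp f 2 ν) :
    (∫ a, f a ∂ν) ^ 2 ≤ (ν Set.univ).toReal * ∫ a, (f a) ^ 2 ∂ν := by
  have h2 : (2 : ℝ≥0∞) = ENNReal.ofReal (2 : ℝ) := by norm_num
  have hpq : Real.HolderConjugate 2 2 := Real.holderConjugate_iff.mpr ⟨by norm_num, by norm_num⟩
  have hf' : MemLp f (ENNReal.ofReal (2:ℝ)) ν := h2 ▸ hf
  have hone : MemLp (fun _ : α => (1:ℝ)) (ENNReal.ofReal (2:ℝ)) ν := h2 ▸ memLp_const 1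
  have key := MeasureTheory.integral_mul_norm_le_Lp_mul_Lq hpq hf' hone
  have e1 : ∫ a, ‖f a‖ * ‖(fun _ : α => (1:ℝ)) a‖ ∂ν = ∫ a, |f a| ∂ν := by
    simp [Real.norm_eq_abs]
  have e2 : ∫ a, ‖f a‖ ^ (2:ℝ) ∂ν = ∫ a, (f a) ^ 2 ∂ν := by
    refine integral_congr_ae (Filter.Eventually.of_forall fun a => ?_)
    have h : ‖f a‖ ^ (2:ℝ) = (f a) ^ 2 := by
      rw [show ((2:ℝ)) = ((2:ℕ):ℝ) from by norm_num, Real.rpow_natCast, Real.norm_eq_abs, sq_abs]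
    simpa using h
  have e3 : ∫ a, ‖(fun _ : α => (1:ℝ)) a‖ ^ (2:ℝ) ∂ν = (ν Set.univ).toReal := by
    simp [measureReal_def]
  rw [e1, e2, e3] at key
  have hA : 0 ≤ ∫ a, (f a) ^ 2 ∂ν := integral_nonneg fun a => sq_nonneg _
  have hB : 0 ≤ (ν Set.univ).toReal := ENNReal.toReal_nonneg
  have habs : |∫ a, f a ∂ν| ≤ (∫ a, (f a) ^ 2 ∂ν) ^ ((1:ℝ)/2) * (ν Set.univ).toReal ^ ((1:ℝ)/2) := by
    calc |∫ a, f a ∂ν| ≤ ∫ a, |f a| ∂ν := by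
          simpa [Real.norm_eq_abs] using norm_integral_le_integral_norm (μ := ν) f
      _ ≤ _ := key
  have hsq : (∫ a, f a ∂ν) ^ 2 ≤ ((∫ a, (f a) ^ 2 ∂ν) ^ ((1:ℝ)/2) * (ν Set.univ).toReal ^ ((1:ℝ)/2)) ^ 2 := by
    rw [← sq_abs (∫ a, f a ∂ν)]
    exact pow_le_pow_left₀ (abs_nonneg _) habs 2
  calc (∫ a, f a ∂ν) ^ 2 ≤ _ := hsq
    _ = (ν Set.univ).toReal * ∫ a, (f a) ^ 2 ∂ν := by
        rw [mul_pow, ← Real.rpow_natCast (_ ^ ((1:ℝ)/2)) 2, ← Real.rpow_natCast ((ν Set.univ).toReal ^ ((1:ℝ)/2)) 2,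
          ← Real.rpow_mul hA, ← Real.rpow_mul hB]
        norm_num
        ring

/- STATEMENT 10: Model ∂E as a finite measure space (α, μ) with μ(∂E) = H¹(∂E) ≤ M and
κ = κ_E ∈ L²(μ). If two disjoint (boundary-component) pieces Γ_i, Γ_j satisfy
∫_{Γ_i} κ = 0 and ∫_{Γ_j} κ = 2π, then H¹(Γ_i) ≤ C(M) ε², where
ε = ‖κ − κ̄‖_{L²(∂E)} and κ̄ is the average of κ over ∂E. (In particular, since
components of zero total curvature have length ≥ 1, such a pair cannot exist for
small ε.) -/
theorem length_bound_for_flat_and_round_components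
    (M : ℝ) (hM : 0 < M) :
    ∃ C : ℝ, 0 < C ∧
      ∀ (α : Type) (_ : MeasurableSpace α) (μ : Measure α)
        (κ : α → ℝ) (Γi Γj : Set α),
        μ Set.univ ≤ ENNReal.ofReal M →
        MeasurableSet Γi → MeasurableSet Γj → Disjoint Γi Γj →
        MemLp κ 2 μ →
        (∫ p in Γi, κ p ∂μ) = 0 →
        (∫ p in Γj, κ p ∂μ) = 2 * Real.pi →
        (μ Γi).toReal ≤
          C * ∫ p, (κ p - (∫ q, κ q ∂μ) / (μ Set.univ).toReal) ^ 2 ∂μ := by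
  refine ⟨M ^ 2 / Real.pi ^ 2, by positivity, ?_⟩
  intro α mα μ κ Γi Γj hμM hΓi hΓj hdisj hκ hi hj
  haveI : IsFiniteMeasure μ := ⟨lt_of_le_of_lt hμM ENNReal.ofReal_lt_top⟩
  set c : ℝ := (∫ q, κ q ∂μ) / (μ Set.univ).toReal with hc
  set f : α → ℝ := fun p => κ p - c with hfdef
  have hf : MemLp f 2 μ := hκ.sub (memLp_const c)
  set ε2 : ℝ := ∫ p, (f p) ^ 2 ∂μ with hε2
  have hε2nonneg : 0 ≤ ε2 := integral_nonneg fun p => sq_nonneg _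
  have hκint : Integrable κ μ := hκ.integrable one_le_two
  have hsqint : Integrable (fun p => (f p) ^ 2) μ := hf.integrable_sq
  set si : ℝ := (μ Γi).toReal with hsi
  set sj : ℝ := (μ Γj).toReal with hsj
  have hsinn : 0 ≤ si := ENNReal.toReal_nonneg
  have hsjnn : 0 ≤ sj := ENNReal.toReal_nonneg
  have hμΓila : (μ Γi) ≠ ⊤ := measure_ne_top μ Γi
  have hsile : si ≤ M := by
    refine le_trans (ENNReal.toReal_mono (by finiteness) (measure_mono (Set.subset_univ _))) ?_
    exact ENNReal.toReal_le_of_le_ofReal hM.le hμM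
  have hsjle : sj ≤ M := by
    refine le_trans (ENNReal.toReal_mono (by finiteness) (measure_mono (Set.subset_univ _))) ?_
    exact ENNReal.toReal_le_of_le_ofReal hM.le hμM
  -- value of set integrals of f
  have hIi : (∫ p in Γi, f p ∂μ) = -(c * si) := by
    rw [hfdef]
    rw [integral_sub hκint.restrict (integrable_const c), hi, integral_const]
    simp [hsi, Measure.restrict_apply_univ, smul_eq_mul, mul_comm, measureReal_def]
  have hIj : (∫ p in Γj, f p ∂μ) = 2 * Real.pi - c * sj := by
    rw [hfdef]
    rw [integral_sub hκint.restrict (integrable_const c), hj, integral_const]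
    simp [hsj, Measure.restrict_apply_univ, smul_eq_mul, mul_comm, measureReal_def]
  -- Cauchy–Schwarz on each set
  have hCS : ∀ (S : Set α), (∫ p in S, f p ∂μ) ^ 2 ≤ (μ S).toReal * ε2 := by
    intro S
    have h1 := cs_sq_integral (μ.restrict S) (hf.restrict S)
    have h2 : ((μ.restrict S) Set.univ).toReal = (μ S).toReal := by
      rw [Measure.restrict_apply_univ]
    have h3 : (∫ a in S, (f a) ^ 2 ∂μ) ≤ ε2 :=
      setIntegral_le_integral hsqint (Filter.Eventually.of_forall fun p => sq_nonneg _)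
    calc (∫ p in S, f p ∂μ) ^ 2 ≤ ((μ.restrict S) Set.univ).toReal * ∫ a in S, (f a) ^ 2 ∂μ := h1
      _ ≤ (μ S).toReal * ε2 := by
          rw [h2]; exact mul_le_mul_of_nonneg_left h3 ENNReal.toReal_nonneg
  have hAi : (c * si) ^ 2 ≤ si * ε2 := by
    have := hCS Γi; rw [hIi] at this; simpa using this
  have hAj : (2 * Real.pi - c * sj) ^ 2 ≤ sj * ε2 := by
    have := hCS Γj; rw [hIj] at this; exact this
  have hπ : (0:ℝ) < Real.pi := Real.pi_pos
  -- goal restated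
  have goal_eq : (M ^ 2 / Real.pi ^ 2) * ε2 = (M ^ 2 * ε2) / Real.pi ^ 2 := by ring
  show si ≤ (M ^ 2 / Real.pi ^ 2) * ε2
  rw [goal_eq, le_div_iff₀ (by positivity)]
  -- case split
  clear_value c f ε2 si sj
  clear hc hfdef hε2 hsi hsj hCS hIi hIj hκint hsqint hf hi hj hμM hΓi hΓj hdisj hμΓila hκ κ Γi Γj this μ mα f α
  rcases le_or_gt (Real.pi ^ 2) (M * ε2) with hcase | hcase
  · nlinarith [mul_le_mul_of_nonneg_left hcase hM.le]
  · -- small ε case: c * sj > π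
    have hAj' : (2 * Real.pi - c * sj) ^ 2 < Real.pi ^ 2 :=
      lt_of_le_of_lt (le_trans hAj (mul_le_mul_of_nonneg_right hsjle hε2nonneg)) hcase
    have hcsj : Real.pi < c * sj := by nlinarith
    have hsjpos : 0 < sj := by
      rcases hsjnn.lt_or_eq with h | h
      · exact h
      · exfalso; rw [← h] at hcsj; simp at hcsj; linarith
    have hcpos : 0 < c := by
      by_contra h
      push_neg at h
      have : c * sj ≤ 0 := mul_nonpos_of_nonpos_of_nonneg h hsjnn
      linarith
    have hcM : Real.pi < c * M :=
      lt_of_lt_of_le hcsj (mul_le_mul_of_nonneg_left hsjle hcpos.le)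
    rcases hsinn.lt_or_eq with hsipos | hsi0
    · have h1 : c ^ 2 * si ≤ ε2 := by nlinarith
      have hπ2 : Real.pi ^ 2 ≤ (c * M) ^ 2 := by nlinarith
      have h2 := mul_le_mul_of_nonneg_left hπ2 hsinn
      nlinarith [mul_le_mul_of_nonneg_left h1 (sq_nonneg M), h2]
    · rw [← hsi0, zero_mul]; positivity
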